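/- Let Ω1 and Ω2 be finite multisets of solution mappings, domain-uniform with domains W1 and W2 respectively, and suppose S = W1 ∩ W2 is nonempty. Let ρ : V → V be injective on S with ρ(S) disjoint from W1 ∪ W2, let Ω3 be the multiset obtained from Ω2 by replacing each μ2 ∈ Ω2 with the mapping μ3 of domain (W2 \ S) ∪ ρ(S) defined by μ3(x) = μ2(x) for x ∈ W2 \ S and μ3(ρ(x)) = μ2(x) for x ∈ S, and let F be the selection formula given by the conjunction of the atoms (x = ρ(x)) over x ∈ S. Then the SPARQL minus operation satisfies Ω1 − Ω2 = Ω1 \ σ_F(Ω1 ⋈ Ω3) as an equality of multisets. In other words, the minus operator of the W3C SPARQL algebra is expressible using join, selection and simple difference. -/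

import Mathlib

open scoped Classical

noncomputable section

/-- A solution mapping: a finite partial function from variables to terms. -/
abbrev SMap (V T : Type) := Finmap (fun _ : V => T)

variable {V T : Type} [DecidableEq V] [DecidableEq T]

/-- Two solution mappings are compatible if they agree on the
intersection of their domains. -/
def Compat (μ1 μ2 : SMap V T) : Prop :=
  ∀ x ∈ μ1, x ∈ μ2 → μ1.lookup x = μ2.lookup x

/-- Join of two multisets of solution mappings: unions of compatible pairs,
multiplicities multiply and add over all decompositions. -/
def mjoin (Ω1 Ω2 : Multiset (SMap V T)) : Multiset (SMap V T) :=
  Ω1.bind fun μ1 => (Ω2.filter fun μ2 => Compat μ1 μ2).map fun μ2 => μ1 ∪ μ2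

/-- Simple difference: keep (with multiplicity) the mappings of `Ω1`
incompatible with every element of `Ω2`. -/
def msdiff (Ω1 Ω2 : Multiset (SMap V T)) : Multiset (SMap V T) :=
  Ω1.filter fun μ1 => ∀ μ2 ∈ Ω2, ¬ Compat μ1 μ2

/-- SPARQL minus: keep (with multiplicity) the mappings of `Ω1` such that every
element of `Ω2` is incompatible with it or has disjoint domain. -/
def sminus (Ω1 Ω2 : Multiset (SMap V T)) : Multiset (SMap V T) :=
  Ω1.filter fun μ1 => ∀ μ2 ∈ Ω2, ¬ Compat μ1 μ2 ∨ μ1.keys ∩ μ2.keys = ∅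

/-- Domain of a multiset of mappings: the union of the domains of its elements. -/
def mdom (Ω : Multiset (SMap V T)) : Finset V := (Ω.map Finmap.keys).sup

/-- A multiset of mappings is domain-uniform when all its elements have the
same domain. -/
def DomUniform (Ω : Multiset (SMap V T)) : Prop :=
  ∀ μ1 ∈ Ω, ∀ μ2 ∈ Ω, Finmap.keys μ1 = Finmap.keys μ2

/-- Three truth values: true, false, error. -/
inductive TV where | t | f | e
deriving DecidableEq

/-- Strong Kleene conjunction. -/
def TV.andTV : TV → TV → TV
  | .t, q => q
  | .f, _ => .f
  | .e, .t => .e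
  | .e, .f => .f
  | .e, .e => .e

/-- Strong Kleene disjunction. -/
def TV.orTV : TV → TV → TV
  | .t, _ => .t
  | .f, q => q
  | .e, .t => .t
  | .e, .f => .e
  | .e, .e => .e

/-- Three-valued negation. -/
def TV.notTV : TV → TV
  | .t => .f
  | .f => .t
  | .e => .e

/-- Selection formulas, built from atoms `x = c`, `x = y` and `bound x`. -/
inductive SForm (V T : Type) where
  | eqc : V → T → SForm V T
  | eqv : V → V → SForm V T
  | bound : V → SForm V T
  | fand : SForm V T → SForm V T → SForm V T
  | for' : SForm V T → SForm V T → SForm V T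
  | fnot : SForm V T → SForm V T

/-- Three-valued evaluation of a selection formula on a solution mapping. -/
def evalF (μ : SMap V T) : SForm V T → TV
  | .eqc x c =>
    match μ.lookup x with
    | some a => if a = c then .t else .f
    | none => .e
  | .eqv x y =>
    match μ.lookup x, μ.lookup y with
    | some a, some b => if a = b then .t else .f
    | some _, none => .e
    | none, _ => .e
  | .bound x => if x ∈ μ then .t else .f
  | .fand F1 F2 => (evalF μ F1).andTV (evalF μ F2)
  | .for' F1 F2 => (evalF μ F1).orTV (evalF μ F2)
  | .fnot F1 => (evalF μ F1).notTV

/-- Selection: keep (with multiplicity) the mappings evaluating `F` to true. -/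
def sel (F : SForm V T) (Ω : Multiset (SMap V T)) : Multiset (SMap V T) :=
  Ω.filter fun μ => evalF μ F = .t

/-- W3C difference: keep (with multiplicity) the mappings `μ1` of `Ω1` such that
every `μ2 ∈ Ω2` is incompatible with `μ1`, or compatible with
`(μ1 ∪ μ2)(F) = false`. -/
def wdiff (F : SForm V T) (Ω1 Ω2 : Multiset (SMap V T)) : Multiset (SMap V T) :=
  Ω1.filter fun μ1 => ∀ μ2 ∈ Ω2,
    ¬ Compat μ1 μ2 ∨ (Compat μ1 μ2 ∧ evalF (μ1 ∪ μ2) F = .f)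

end

section auxlemmas
variable {V T : Type} [DecidableEq V] [DecidableEq T]

lemma andTV_eq_t {p q : TV} : p.andTV q = .t ↔ p = .t ∧ q = .t := by
  cases p <;> cases q <;> simp [TV.andTV]

lemma evalF_eqv_t (μ : SMap V T) (a b : V) :
    evalF μ (SForm.eqv a b) = .t ↔ ∃ v, μ.lookup a = some v ∧ μ.lookup b = some v := by
  simp only [evalF]
  rcases ha : μ.lookup a with _ | va <;> rcases hb : μ.lookup b with _ | vb <;> simp
  by_cases h : va = vb <;> simp [h]
  exact fun h' => h h'.symm

lemma evalF_foldl_t (μ : SMap V T) (ρ : V → V) (l : List V) (F0 : SForm V T) :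
    evalF μ (l.foldl (fun F y => SForm.fand F (SForm.eqv y (ρ y))) F0) = .t ↔
      (evalF μ F0 = .t ∧ ∀ y ∈ l, evalF μ (SForm.eqv y (ρ y)) = .t) := by
  induction l generalizing F0 with
  | nil => simp
  | cons a l ih =>
    rw [List.foldl_cons, ih]
    simp only [evalF, andTV_eq_t, List.mem_cons]
    constructor
    · rintro ⟨⟨h0, ha⟩, hl⟩
      exact ⟨h0, fun y hy => hy.elim (fun h => h ▸ ha) (hl y)⟩
    · rintro ⟨h0, h⟩
      exact ⟨⟨h0, h a (.inl rfl)⟩, fun y hy => h y (.inr hy)⟩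

lemma rel_exists_left {α β : Type*} {r : α → β → Prop} {s : Multiset α} {t : Multiset β}
    (h : Multiset.Rel r s t) : ∀ b ∈ t, ∃ a ∈ s, r a b := by
  induction h with
  | zero => simp
  | @cons a b s t hab _ ih =>
    intro c hc
    rw [Multiset.mem_cons] at hc
    rcases hc with rfl | hc
    · exact ⟨a, Multiset.mem_cons_self a s, hab⟩
    · obtain ⟨a', ha', hr⟩ := ih c hc
      exact ⟨a', Multiset.mem_cons_of_mem ha', hr⟩

lemma rel_exists_right {α β : Type*} {r : α → β → Prop} {s : Multiset α} {t : Multiset β}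
    (h : Multiset.Rel r s t) : ∀ a ∈ s, ∃ b ∈ t, r a b := by
  induction h with
  | zero => simp
  | @cons a b s t hab _ ih =>
    intro c hc
    rw [Multiset.mem_cons] at hc
    rcases hc with rfl | hc
    · exact ⟨b, Multiset.mem_cons_self b t, hab⟩
    · obtain ⟨b', hb', hr⟩ := ih c hc
      exact ⟨b', Multiset.mem_cons_of_mem hb', hr⟩

omit [DecidableEq T] in
lemma mem_mjoin {Ω1 Ω2 : Multiset (SMap V T)} {ν : SMap V T} :
    ν ∈ mjoin Ω1 Ω2 ↔ ∃ a ∈ Ω1, ∃ b ∈ Ω2, Compat a b ∧ ν = a ∪ b := by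
  simp only [mjoin, Multiset.mem_bind, Multiset.mem_map, Multiset.mem_filter]
  constructor
  · rintro ⟨a, ha, b, ⟨hb, hc⟩, rfl⟩
    exact ⟨a, ha, b, hb, hc, rfl⟩
  · rintro ⟨a, ha, b, hb, hc, rfl⟩
    exact ⟨a, ha, b, ⟨hb, hc⟩, rfl⟩

end auxlemmas

/-- the SPARQL minus operation is expressible with join,
selection and simple difference.  `Ω1` and `Ω2` are domain-uniform with
domains `W1` and `W2`; `S = W1 ∩ W2` is nonempty (it lists as `x :: xs`);
`ρ` renames `S` to fresh variables; `Ω3` is the renaming of `Ω2` (each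
`μ2` is replaced by the mapping with domain `(W2 \ S) ∪ ρ(S)` agreeing with
`μ2` on `W2 \ S` and sending `ρ(y)` to `μ2(y)` for `y ∈ S`); and the
selection formula is the conjunction of the atoms `y = ρ(y)` over `y ∈ S`. -/
theorem stmt_3 {V T : Type} [DecidableEq V] [DecidableEq T]
    (Ω1 Ω2 Ω3 : Multiset (SMap V T)) (W1 W2 : Finset V)
    (h1 : ∀ μ ∈ Ω1, Finmap.keys μ = W1) (h2 : ∀ μ ∈ Ω2, Finmap.keys μ = W2)
    (ρ : V → V)
    (hinj : Set.InjOn ρ ((W1 ∩ W2 : Finset V) : Set V))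
    (hfresh : Disjoint ((W1 ∩ W2).image ρ) (W1 ∪ W2))
    (hΩ3 : Multiset.Rel (fun μ2 μ3 =>
        Finmap.keys μ3 = (W2 \ (W1 ∩ W2)) ∪ (W1 ∩ W2).image ρ ∧
        (∀ y ∈ W2 \ (W1 ∩ W2), μ3.lookup y = μ2.lookup y) ∧
        (∀ y ∈ W1 ∩ W2, μ3.lookup (ρ y) = μ2.lookup y)) Ω2 Ω3)
    (x : V) (xs : List V) (hS : (W1 ∩ W2).toList = x :: xs) :
    sminus Ω1 Ω2 =
      msdiff Ω1
        (sel (xs.foldl (fun F y => SForm.fand F (SForm.eqv y (ρ y)))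
              (SForm.eqv x (ρ x)))
          (mjoin Ω1 Ω3)) := by
  classical
  have hxS : x ∈ W1 ∩ W2 := by
    rw [← Finset.mem_toList, hS]; exact List.mem_cons_self
  have hSm : ∀ y, y ∈ W1 ∩ W2 ↔ y = x ∨ y ∈ xs := by
    intro y; rw [← Finset.mem_toList, hS]; simp
  -- freshness consequences
  have hfr : ∀ y ∈ W1 ∩ W2, ρ y ∉ W1 ∧ ρ y ∉ W2 := by
    intro y hy
    have h := Finset.disjoint_left.mp hfresh (Finset.mem_image_of_mem ρ hy)
    simp only [Finset.mem_union] at h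
    exact ⟨fun h1 => h (Or.inl h1), fun h2 => h (Or.inr h2)⟩
  -- membership in Ω3 elements' keys
  have hmem3 : ∀ {μ3 : SMap V T}, Finmap.keys μ3 = (W2 \ (W1 ∩ W2)) ∪ (W1 ∩ W2).image ρ →
      ∀ {z : V}, z ∈ μ3 ↔ z ∈ W2 \ (W1 ∩ W2) ∨ z ∈ (W1 ∩ W2).image ρ := by
    intro μ3 hk z
    rw [← Finmap.mem_keys, hk, Finset.mem_union]
  -- any element of Ω1 is compatible with any element with keys of Ω3-shape (disjoint doms)
  have hdisj : ∀ (a b : SMap V T), Finmap.keys a = W1 →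
      Finmap.keys b = (W2 \ (W1 ∩ W2)) ∪ (W1 ∩ W2).image ρ → Compat a b := by
    intro a b hka hkb z hza hzb
    exfalso
    have hz1 : z ∈ W1 := by rw [← hka]; exact Finmap.mem_keys.mpr hza
    rcases (hmem3 hkb).mp hzb with hz | hz
    · rw [Finset.mem_sdiff] at hz
      exact hz.2 (Finset.mem_inter.mpr ⟨hz1, hz.1⟩)
    · exact Finset.disjoint_left.mp hfresh hz (Finset.mem_union_left _ hz1)
  unfold sminus msdiff
  apply Multiset.filter_congr
  intro μ1 hμ1
  have hk1 : Finmap.keys μ1 = W1 := h1 μ1 hμ1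
  have hmem1 : ∀ {z : V}, z ∈ μ1 ↔ z ∈ W1 := by
    intro z; rw [← Finmap.mem_keys, hk1]
  constructor
  · -- sminus condition → msdiff condition
    intro h ν hν hcν
    obtain ⟨hνmem, hνF⟩ := Multiset.mem_filter.mp hν
    obtain ⟨a, ha, b, hb, hab, rfl⟩ := mem_mjoin.mp hνmem
    obtain ⟨μ2, hμ2, hkb, _, hren⟩ := rel_exists_left hΩ3 b hb
    have hka : Finmap.keys a = W1 := h1 a ha
    have hk2 : Finmap.keys μ2 = W2 := h2 μ2 hμ2
    -- F true on a ∪ b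
    rw [evalF_foldl_t] at hνF
    have hatom : ∀ y ∈ W1 ∩ W2, ∃ v, (a ∪ b).lookup y = some v ∧ (a ∪ b).lookup (ρ y) = some v := by
      intro y hy
      rcases (hSm y).mp hy with rfl | hy'
      · exact (evalF_eqv_t _ _ _).mp hνF.1
      · exact (evalF_eqv_t _ _ _).mp (hνF.2 y hy')
    -- derive Compat μ1 μ2
    have hcompat : Compat μ1 μ2 := by
      intro z hz1 hz2
      have hzW1 : z ∈ W1 := hmem1.mp hz1
      have hzW2 : z ∈ W2 := by rw [← hk2, Finmap.mem_keys]; exact hz2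
      have hzS : z ∈ W1 ∩ W2 := Finset.mem_inter.mpr ⟨hzW1, hzW2⟩
      obtain ⟨v, hv1, hv2⟩ := hatom z hzS
      -- (a ∪ b).lookup (ρ z) = b.lookup (ρ z) = μ2.lookup z
      have hρa : ρ z ∉ a := fun hmem => (hfr z hzS).1 (by rw [← hka]; exact Finmap.mem_keys.mpr hmem)
      have hb2 : (a ∪ b).lookup (ρ z) = μ2.lookup z := by
        rw [Finmap.lookup_union_right hρa, hren z hzS]
      -- μ1.lookup z = (a ∪ b).lookup z by Compat μ1 (a ∪ b)
      have hzab : z ∈ a ∪ b := by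
        rw [Finmap.mem_union]; left; exact Finmap.mem_keys.mp (by rw [hka]; exact hzW1)
      have h1z : μ1.lookup z = (a ∪ b).lookup z := hcν z hz1 hzab
      rw [h1z, hv1, ← hb2, hv2]
    rcases h μ2 hμ2 with hnc | hempty
    · exact hnc hcompat
    · rw [hk1, hk2] at hempty
      exact absurd hempty (Finset.ne_empty_of_mem hxS)
  · -- msdiff condition → sminus condition
    intro h μ2 hμ2
    left
    intro hcompat
    have hk2 : Finmap.keys μ2 = W2 := h2 μ2 hμ2
    obtain ⟨μ3, hμ3, hkb, _, hren⟩ := rel_exists_right hΩ3 μ2 hμ2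
    have hc13 : Compat μ1 μ3 := hdisj μ1 μ3 hk1 hkb
    set ν := μ1 ∪ μ3 with hν
    have hνmem : ν ∈ mjoin Ω1 Ω3 := mem_mjoin.mpr ⟨μ1, hμ1, μ3, hμ3, hc13, rfl⟩
    -- atoms are true
    have hatom : ∀ y ∈ W1 ∩ W2, evalF ν (SForm.eqv y (ρ y)) = .t := by
      intro y hy
      rw [evalF_eqv_t]
      have hyW1 : y ∈ W1 := (Finset.mem_inter.mp hy).1
      have hyW2 : y ∈ W2 := (Finset.mem_inter.mp hy).2
      have hy1 : y ∈ μ1 := hmem1.mpr hyW1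
      have hy2 : y ∈ μ2 := Finmap.mem_keys.mp (by rw [hk2]; exact hyW2)
      obtain ⟨v, hv⟩ := Finmap.mem_iff.mp hy1
      refine ⟨v, ?_, ?_⟩
      · rw [Finmap.lookup_union_left hy1, hv]
      · have hρ1 : ρ y ∉ μ1 := fun hm => (hfr y hy).1 (hmem1.mp hm)
        rw [Finmap.lookup_union_right hρ1, hren y hy, ← hcompat y hy1 hy2, hv]
    have hνsel : ν ∈ sel (xs.foldl (fun F y => SForm.fand F (SForm.eqv y (ρ y)))
        (SForm.eqv x (ρ x))) (mjoin Ω1 Ω3) := by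
      rw [sel, Multiset.mem_filter]
      refine ⟨hνmem, ?_⟩
      rw [evalF_foldl_t]
      exact ⟨hatom x hxS, fun y hy => hatom y (by rw [hSm]; exact Or.inr hy)⟩
    -- but μ1 is compatible with ν
    refine h ν hνsel ?_
    intro z hz _
    rw [Finmap.lookup_union_left hz]
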